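/- For the q_{ij}-CCR operator T with all |q_{ij}| < 1, the operator 1 + T is strictly positive, i.e., ker(1 + T) = 0. -/

import Mathlib

open scoped InnerProductSpace

private lemma swap_sum {d : ℕ} {M : Type*} [AddCommMonoid M] (g : Fin d × Fin d → M) :
    ∑ p : Fin d × Fin d, g (p.2, p.1) = ∑ p : Fin d × Fin d, g p :=
  Fintype.sum_equiv (Equiv.prodComm (Fin d) (Fin d)) _ _ (fun _ => rfl)

theorem qccr_one_add_T_strictly_positive (d : ℕ) (hd : 1 ≤ d)
    (q : Fin d → Fin d → ℂ)
    (hq : ∀ i j : Fin d, q j i = starRingEnd ℂ (q i j))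
    (hb : ∀ i j : Fin d, ‖q i j‖ < 1)
    (T : EuclideanSpace ℂ (Fin d × Fin d) →L[ℂ] EuclideanSpace ℂ (Fin d × Fin d))
    (hT : ∀ i j : Fin d,
      T (EuclideanSpace.single (i, j) (1 : ℂ)) =
        q i j • EuclideanSpace.single (j, i) (1 : ℂ)) :
    (1 + T).IsPositive ∧ LinearMap.ker (1 + T).toLinearMap = ⊥ := by
  haveI : Nonempty (Fin d) := ⟨⟨0, hd⟩⟩
  have hsum_apply : ∀ (f : Fin d × Fin d → EuclideanSpace ℂ (Fin d × Fin d))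
      (r : Fin d × Fin d), (∑ p, f p) r = ∑ p, f p r :=
    fun f r => by rw [WithLp.ofLp_sum]; exact Finset.sum_apply r Finset.univ _
  have hdecomp : ∀ x : EuclideanSpace ℂ (Fin d × Fin d),
      x = ∑ p : Fin d × Fin d, (x p) • EuclideanSpace.single p (1:ℂ) := by
    intro x; ext r
    rw [hsum_apply]
    simp [EuclideanSpace.single_apply]
  -- formula for T
  have hTx : ∀ (x : EuclideanSpace ℂ (Fin d × Fin d)) (p : Fin d × Fin d),
      T x p = q p.2 p.1 * x (p.2, p.1) := by
    intro x p
    conv_lhs => rw [hdecomp x]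
    rw [map_sum, hsum_apply]
    rw [Finset.sum_eq_single (p.2, p.1)]
    · rw [map_smul, hT p.2 p.1]
      simp [EuclideanSpace.single_apply, mul_comm]
    · rintro ⟨i, j⟩ _ hr
      have hne : p ≠ (j, i) := fun h => hr (by subst h; rfl)
      rw [map_smul, hT i j]
      simp [EuclideanSpace.single_apply, hne]
    · simp
  have hinner : ∀ x y : EuclideanSpace ℂ (Fin d × Fin d),
      ⟪x, y⟫_ℂ = ∑ p, starRingEnd ℂ (x p) * y p := by
    intro x y; simp [PiLp.inner_apply, RCLike.inner_apply]; exact Finset.sum_congr rfl fun _ _ => mul_comm _ _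
  have hnorm : ∀ x : EuclideanSpace ℂ (Fin d × Fin d), ‖x‖^2 = ∑ p, ‖x p‖^2 := by
    intro x; rw [EuclideanSpace.norm_eq, Real.sq_sqrt (by positivity)]
  -- the constant c
  set c : ℝ := Finset.univ.sup' Finset.univ_nonempty
    (fun p : Fin d × Fin d => ‖q p.1 p.2‖) with hc
  have hcb : ∀ i j, ‖q i j‖ ≤ c := fun i j =>
    Finset.le_sup' (fun p : Fin d × Fin d => ‖q p.1 p.2‖) (Finset.mem_univ (i, j))
  have hc1 : c < 1 := by
    rw [hc, Finset.sup'_lt_iff]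
    exact fun p _ => hb p.1 p.2
  have hc0 : 0 ≤ c := le_trans (norm_nonneg _) (hcb (Classical.arbitrary _) (Classical.arbitrary _))
  -- symmetry
  have hsym : ∀ x y : EuclideanSpace ℂ (Fin d × Fin d), ⟪T x, y⟫_ℂ = ⟪x, T y⟫_ℂ := by
    intro x y
    rw [hinner, hinner]
    rw [← swap_sum (fun p => starRingEnd ℂ (T x p) * y p)]
    refine Finset.sum_congr rfl fun p _ => ?_
    simp only [hTx, map_mul]
    rw [hq p.2 p.1]
    simp only [Complex.conj_conj]
    ring_nf
  have hsa : IsSelfAdjoint (1 + T) := by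
    rw [ContinuousLinearMap.isSelfAdjoint_iff_isSymmetric]
    intro x y
    simp only [ContinuousLinearMap.coe_coe, ContinuousLinearMap.add_apply,
      ContinuousLinearMap.one_apply, inner_add_left, inner_add_right]
    rw [hsym]
  -- lower bound for re ⟪T x, x⟫
  have h1 : ∀ x : EuclideanSpace ℂ (Fin d × Fin d), -(c * ‖x‖^2) ≤ (⟪T x, x⟫_ℂ).re := by
    intro x
    rw [hinner, Complex.re_sum]
    have step : ∀ p : Fin d × Fin d,
        -(c * ((‖x (p.2, p.1)‖^2 + ‖x p‖^2) / 2)) ≤ (starRingEnd ℂ (T x p) * x p).re := by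
      intro p
      have h2 : -‖(starRingEnd ℂ (T x p) * x p)‖ ≤ (starRingEnd ℂ (T x p) * x p).re :=
        (abs_le.1 (Complex.abs_re_le_norm _)).1
      have h3 : ‖(starRingEnd ℂ (T x p) * x p)‖
          = ‖q p.2 p.1‖ * ‖x (p.2, p.1)‖ * ‖x p‖ := by
        simp [hTx, norm_mul]
      have h4 := hcb p.2 p.1
      have h5 : (0:ℝ) ≤ ‖x (p.2, p.1)‖ := norm_nonneg _
      have h6 : (0:ℝ) ≤ ‖x p‖ := norm_nonneg _
      nlinarith [sq_nonneg (‖x (p.2, p.1)‖ - ‖x p‖), mul_nonneg h5 h6,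
        mul_le_mul_of_nonneg_right h4 (mul_nonneg h5 h6)]
    calc -(c * ‖x‖^2)
        = (-(c/2)) * (2 * ‖x‖^2) := by ring
      _ = (-(c/2)) * ∑ p : Fin d × Fin d, (‖x (p.2, p.1)‖^2 + ‖x p‖^2) := by
          rw [Finset.sum_add_distrib, swap_sum (fun p => ‖x p‖^2), ← hnorm]; ring_nf
      _ = ∑ p : Fin d × Fin d, -(c * ((‖x (p.2, p.1)‖^2 + ‖x p‖^2) / 2)) := by
          rw [Finset.mul_sum]; exact Finset.sum_congr rfl fun p _ => by ring
      _ ≤ _ := Finset.sum_le_sum fun p _ => step p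
  -- key inequality
  have hkey : ∀ x : EuclideanSpace ℂ (Fin d × Fin d),
      (1 - c) * ‖x‖^2 ≤ (⟪(1 + T) x, x⟫_ℂ).re := by
    intro x
    have : ⟪(1 + T) x, x⟫_ℂ = ⟪x, x⟫_ℂ + ⟪T x, x⟫_ℂ := by
      simp [ContinuousLinearMap.add_apply, inner_add_left]
    rw [this, Complex.add_re]
    have h7 : (⟪x, x⟫_ℂ).re = ‖x‖^2 := inner_self_eq_norm_sq (𝕜 := ℂ) x
    rw [h7]
    linarith [h1 x]
  constructor
  · refine ⟨ContinuousLinearMap.isSelfAdjoint_iff_isSymmetric.mp hsa, fun x => ?_⟩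
    have := hkey x
    have h0 : (0:ℝ) ≤ (1 - c) * ‖x‖^2 := by nlinarith [sq_nonneg ‖x‖]
    calc (0:ℝ) ≤ (⟪(1 + T) x, x⟫_ℂ).re := le_trans h0 (hkey x)
      _ = (1 + T).reApplyInnerSelf x := rfl
  · rw [Submodule.eq_bot_iff]
    intro x hx
    have hx0 : (1 + T) x = 0 := hx
    have := hkey x
    rw [hx0] at this
    simp only [inner_zero_left, Complex.zero_re] at this
    have hsq : ‖x‖^2 = 0 := le_antisymm (by nlinarith) (sq_nonneg _)
    exact norm_eq_zero.mp (pow_eq_zero_iff (two_ne_zero) |>.mp hsq)
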